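/- Let U ⊆ ℂ be open and f : U → ℂ holomorphic. Define φ : U → ℝ by φ(z) = (1 − |f(z)|²)/(1 + |f(z)|²). Then φ is twice real-differentiable on U and for every z ∈ U one has Δφ(z) = −(8|f′(z)|²/(1 + |f(z)|²)²)·φ(z). In particular, at every point where f′(z) ≠ 0, φ satisfies Δ_g φ = 2φ for the Laplace–Beltrami operator Δ_g = −((1+|f|²)²/(4|f′|²))·Δ of the pullback metric g = f*g_st. -/

import Mathlib

/-- The Euclidean Laplacian `Δ = ∂²/∂x² + ∂²/∂y²` of a real-valued function on `ℂ ≃ ℝ²`,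
computed via iterated real Fréchet derivatives in the directions `1` and `I`. -/
noncomputable def lapR (φ : ℂ → ℝ) (z : ℂ) : ℝ :=
  fderiv ℝ (fun w => fderiv ℝ φ w 1) z 1 +
  fderiv ℝ (fun w => fderiv ℝ φ w Complex.I) z Complex.I

open Complex

noncomputable def reMul (c : ℂ) : ℂ →L[ℝ] ℝ :=
  Complex.reCLM.comp ((ContinuousLinearMap.mul ℂ ℂ c).restrictScalars ℝ)

@[simp] lemma reMul_apply (c v : ℂ) : reMul c v = (c * v).re := rfl

noncomputable def cMul (d : ℂ) : ℂ →L[ℝ] ℂ :=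
  (ContinuousLinearMap.smulRight (1 : ℂ →L[ℂ] ℂ) d).restrictScalars ℝ

@[simp] lemma cMul_apply (d v : ℂ) : cMul d v = v * d := by
  simp [cMul, smul_eq_mul]

lemma hasFDerivAt_cMul {f : ℂ → ℂ} {d w : ℂ} (hd : HasDerivAt f d w) :
    HasFDerivAt f (cMul d) w :=
  hd.hasFDerivAt.restrictScalars ℝ

lemma hasFDerivAt_normSq_comp {f : ℂ → ℂ} {d w : ℂ} (hd : HasDerivAt f d w) :
    HasFDerivAt (fun z => Complex.normSq (f z))
      ((2 : ℝ) • reMul ((starRingEnd ℂ) (f w) * d)) w := by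
  have hF : HasFDerivAt f (cMul d) w := hasFDerivAt_cMul hd
  have hre : HasFDerivAt (fun z => (f z).re) (Complex.reCLM.comp (cMul d)) w :=
    (Complex.reCLM.hasFDerivAt).comp w hF
  have him : HasFDerivAt (fun z => (f z).im) (Complex.imCLM.comp (cMul d)) w :=
    (Complex.imCLM.hasFDerivAt).comp w hF
  have h := (hre.mul hre).add (him.mul him)
  have heq : (fun z => (f z).re * (f z).re + (f z).im * (f z).im)
      = fun z => Complex.normSq (f z) := by
    funext z; simp [Complex.normSq_apply]
  change HasFDerivAt (fun z => (f z).re * (f z).re + (f z).im * (f z).im) _ w at h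
  rw [heq] at h
  refine h.congr_fderiv ?_
  ext v
  simp [Complex.mul_re, Complex.mul_im]
  ring

lemma one_add_normSq_ne (a : ℂ) : (1 : ℝ) + Complex.normSq a ≠ 0 := by
  have := Complex.normSq_nonneg a
  nlinarith

lemma hasFDerivAt_phi {f : ℂ → ℂ} {d w : ℂ} (hd : HasDerivAt f d w) :
    HasFDerivAt (fun z => (1 - Complex.normSq (f z)) / (1 + Complex.normSq (f z)))
      ((-4 / (1 + Complex.normSq (f w)) ^ 2) • reMul ((starRingEnd ℂ) (f w) * d)) w := by
  have hq := hasFDerivAt_normSq_comp hd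
  have hh : HasDerivAt (fun t : ℝ => (1 - t) / (1 + t))
      (-2 / (1 + Complex.normSq (f w)) ^ 2) (Complex.normSq (f w)) := by
    have h1 : HasDerivAt (fun t : ℝ => 1 - t) (-1) (Complex.normSq (f w)) :=
      (hasDerivAt_id _).const_sub 1
    have h2 : HasDerivAt (fun t : ℝ => 1 + t) 1 (Complex.normSq (f w)) :=
      (hasDerivAt_id _).const_add 1
    have := h1.div h2 (one_add_normSq_ne (f w))
    refine this.congr_deriv ?_
    ring
  have h := hh.comp_hasFDerivAt w hq
  refine h.congr_fderiv ?_
  ext v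
  simp only [ContinuousLinearMap.smul_apply, reMul_apply, smul_eq_mul, Function.comp]
  ring

lemma fderiv_g (f : ℂ → ℂ) (z v : ℂ) (hd : HasDerivAt f (deriv f z) z)
    (hd2 : HasDerivAt (deriv f) (deriv (deriv f) z) z) :
    fderiv ℝ (fun w => -4 / (1 + Complex.normSq (f w)) ^ 2 *
        ((starRingEnd ℂ) (f w) * deriv f w * v).re) z v
      = -4 / (1 + Complex.normSq (f z)) ^ 2 *
          (Complex.normSq (v * deriv f z)
            + ((starRingEnd ℂ) (f z) * (deriv (deriv f) z * v * v)).re)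
        + 16 * ((starRingEnd ℂ) (f z) * deriv f z * v).re ^ 2
            / (1 + Complex.normSq (f z)) ^ 3 := by
  have hq := hasFDerivAt_normSq_comp hd
  -- outer coefficient  w ↦ -4/(1+q w)^2
  have hk : HasDerivAt (fun t : ℝ => -4 / (1 + t) ^ 2)
      (8 / (1 + Complex.normSq (f z)) ^ 3) (Complex.normSq (f z)) := by
    have h2 : HasDerivAt (fun t : ℝ => (1 + t) ^ 2)
        (2 * (1 + Complex.normSq (f z))) (Complex.normSq (f z)) := by
      have := ((hasDerivAt_id (Complex.normSq (f z))).const_add 1).pow 2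
      exact this.congr_deriv (by simp [id])
    have hne : ((1 : ℝ) + Complex.normSq (f z)) ^ 2 ≠ 0 :=
      pow_ne_zero _ (one_add_normSq_ne (f z))
    have hpos : (0:ℝ) < 1 + Complex.normSq (f z) := by
      have := Complex.normSq_nonneg (f z); linarith
    have := (hasDerivAt_const (Complex.normSq (f z)) (-4 : ℝ)).div h2 hne
    refine this.congr_deriv ?_
    rw [div_eq_div_iff (by positivity) (by positivity)]
    ring
  have hc : HasFDerivAt (fun w => -4 / (1 + Complex.normSq (f w)) ^ 2)
      ((8 / (1 + Complex.normSq (f z)) ^ 3) • ((2 : ℝ) •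
        reMul ((starRingEnd ℂ) (f z) * deriv f z))) z := by have := hk.comp_hasFDerivAt z hq; exact this
  -- inner function  w ↦ re(conj (f w) * deriv f w * v)
  have hF : HasFDerivAt f (cMul (deriv f z)) z := hasFDerivAt_cMul hd
  have hconj : HasFDerivAt (fun w => (starRingEnd ℂ) (f w))
      ((Complex.conjCLE.toContinuousLinearMap).comp (cMul (deriv f z))) z :=
    (Complex.conjCLE.toContinuousLinearMap.hasFDerivAt).comp z hF
  have hDf : HasFDerivAt (deriv f) (cMul (deriv (deriv f) z)) z := hasFDerivAt_cMul hd2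
  have hmul := hconj.mul hDf
  have hmulv := hmul.mul_const v
  have hre : HasFDerivAt (fun y => ((starRingEnd ℂ) (f y) * deriv f y * v).re)
      (Complex.reCLM.comp (v • ((starRingEnd ℂ) (f z) • cMul (deriv (deriv f) z)
        + deriv f z • (Complex.conjCLE.toContinuousLinearMap).comp (cMul (deriv f z))))) z :=
    (Complex.reCLM.hasFDerivAt).comp z hmulv
  have htot : HasFDerivAt (fun w => -4 / (1 + Complex.normSq (f w)) ^ 2 *
      ((starRingEnd ℂ) (f w) * deriv f w * v).re) _ z := hc.mul hre
  rw [htot.fderiv]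
  simp only [ContinuousLinearMap.add_apply, ContinuousLinearMap.smul_apply,
    ContinuousLinearMap.comp_apply, reMul_apply, cMul_apply, smul_eq_mul,
    ContinuousLinearEquiv.coe_coe, Complex.conjCLE_apply, Complex.reCLM_apply]
  have hne : ((1 : ℝ) + Complex.normSq (f z)) ≠ 0 := one_add_normSq_ne (f z)
  field_simp
  simp only [Complex.normSq_apply, Complex.mul_re, Complex.mul_im, Complex.conj_re,
    Complex.conj_im, Complex.add_re, Complex.add_im, pow_two]
  ring

/-- For `f` holomorphic on an open `U ⊆ ℂ`, the function
`φ = (1 - |f|²)/(1 + |f|²)` is twice real-differentiable on `U` and satisfies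
`Δφ = -(8|f′|²/(1+|f|²)²)·φ`; in particular, wherever `f′ ≠ 0`, it is an eigenfunction with
eigenvalue `2` of the Laplace–Beltrami operator `Δ_g = -((1+|f|²)²/(4|f′|²))·Δ` of the
pullback metric `g = f*g_st`. -/
theorem stmt_0 (U : Set ℂ) (hU : IsOpen U) (f : ℂ → ℂ)
    (hf : DifferentiableOn ℂ f U) :
    ContDiffOn ℝ 2
      (fun z => (1 - ‖f z‖ ^ 2) / (1 + ‖f z‖ ^ 2)) U ∧
    (∀ z ∈ U,
      lapR (fun z => (1 - ‖f z‖ ^ 2) / (1 + ‖f z‖ ^ 2)) z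
        = -(8 * ‖deriv f z‖ ^ 2 / (1 + ‖f z‖ ^ 2) ^ 2) *
            ((1 - ‖f z‖ ^ 2) / (1 + ‖f z‖ ^ 2))) ∧
    (∀ z ∈ U, deriv f z ≠ 0 →
      -((1 + ‖f z‖ ^ 2) ^ 2 / (4 * ‖deriv f z‖ ^ 2)) *
          lapR (fun z => (1 - ‖f z‖ ^ 2) / (1 + ‖f z‖ ^ 2)) z
        = 2 * ((1 - ‖f z‖ ^ 2) / (1 + ‖f z‖ ^ 2))) := by
  have habs : (fun z => (1 - ‖f z‖ ^ 2) / (1 + ‖f z‖ ^ 2))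
      = fun z => (1 - Complex.normSq (f z)) / (1 + Complex.normSq (f z)) := by
    funext z; rw [Complex.sq_norm]
  have hA : AnalyticOnNhd ℂ f U := hf.analyticOnNhd hU
  have hdf : DifferentiableOn ℂ (deriv f) U := hA.deriv.differentiableOn
  have hfd : ∀ z ∈ U, HasDerivAt f (deriv f z) z := fun z hz =>
    (hf.differentiableAt (hU.mem_nhds hz)).hasDerivAt
  have hfd2 : ∀ z ∈ U, HasDerivAt (deriv f) (deriv (deriv f) z) z := fun z hz =>
    (hdf.differentiableAt (hU.mem_nhds hz)).hasDerivAt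
  have main : ∀ z ∈ U,
      lapR (fun z => (1 - ‖f z‖ ^ 2) / (1 + ‖f z‖ ^ 2)) z
        = -(8 * ‖deriv f z‖ ^ 2 / (1 + ‖f z‖ ^ 2) ^ 2) *
            ((1 - ‖f z‖ ^ 2) / (1 + ‖f z‖ ^ 2)) := by
    intro z hz
    rw [habs]
    have key : ∀ v : ℂ,
        fderiv ℝ (fun w => fderiv ℝ
          (fun z => (1 - Complex.normSq (f z)) / (1 + Complex.normSq (f z))) w v) z v
        = fderiv ℝ (fun w => -4 / (1 + Complex.normSq (f w)) ^ 2 *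
            ((starRingEnd ℂ) (f w) * deriv f w * v).re) z v := by
      intro v
      have hev : (fun w => fderiv ℝ
            (fun z => (1 - Complex.normSq (f z)) / (1 + Complex.normSq (f z))) w v)
          =ᶠ[nhds z] (fun w => -4 / (1 + Complex.normSq (f w)) ^ 2 *
            ((starRingEnd ℂ) (f w) * deriv f w * v).re) := by
        filter_upwards [hU.mem_nhds hz] with w hw
        rw [(hasFDerivAt_phi (hfd w hw)).fderiv]
        simp only [ContinuousLinearMap.smul_apply, reMul_apply, smul_eq_mul]
      rw [hev.fderiv_eq]
    unfold lapR
    rw [key 1, key Complex.I, fderiv_g f z 1 (hfd z hz) (hfd2 z hz),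
      fderiv_g f z Complex.I (hfd z hz) (hfd2 z hz)]
    simp only [Complex.sq_norm]
    have hne : ((1 : ℝ) + Complex.normSq (f z)) ≠ 0 := one_add_normSq_ne (f z)
    field_simp
    simp only [Complex.normSq_apply, Complex.mul_re, Complex.mul_im, Complex.conj_re,
      Complex.conj_im, Complex.I_re, Complex.I_im, Complex.one_re, Complex.one_im,
      Complex.I_sq, Complex.neg_re, Complex.neg_im]
    ring
  refine ⟨?_, main, ?_⟩
  · rw [habs]
    have hn : ContDiff ℝ 2 (fun w : ℂ => Complex.normSq w) := by
      have : (fun w : ℂ => Complex.normSq w) = fun w : ℂ => w.re * w.re + w.im * w.im := by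
        funext w; simp [Complex.normSq_apply]
      rw [this]
      exact (Complex.reCLM.contDiff.mul Complex.reCLM.contDiff).add
        (Complex.imCLM.contDiff.mul Complex.imCLM.contDiff)
    have hFcd : ContDiff ℝ 2 (fun w : ℂ => (1 - Complex.normSq w) / (1 + Complex.normSq w)) :=
      (contDiff_const.sub hn).div (contDiff_const.add hn) fun w => one_add_normSq_ne w
    have hfc : ContDiffOn ℝ 2 f U := (hA.contDiffOn_of_completeSpace).restrict_scalars ℝ
    exact hFcd.comp_contDiffOn hfc
  · intro z hz hd0
    rw [main z hz]
    have h1 : ‖deriv f z‖ ≠ 0 := norm_ne_zero_iff.mpr hd0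
    have h2 : (1 : ℝ) + ‖f z‖ ^ 2 ≠ 0 := by
      rw [Complex.sq_norm]; exact one_add_normSq_ne (f z)
    field_simp
    ring
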